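/- Suppose 0 < ε < 1 and for every iteration t ≥ 0 and active vertex v, the freezing threshold satisfies T_{v,t} ∈ [1−4ε, 1−2ε], and edge weights of active edges are multiplied by 1/(1−ε) per iteration while frozen edges keep their weight. If at iteration t the fractional matching {x_{e,t}} is valid (∑_{e∋v} x_{e,t} ≤ w(v) for all v) and every active vertex v satisfies ∑_{e∋v} x_{e,t} < T_{v,t}·w(v), then {x_{e,t+1}} is also valid: ∑_{e∋v} x_{e,t+1} ≤ w(v) for all v. -/
import Mathlib


/-- One iteration of the primal-dual update preserves validity of the
fractional matching: if every active vertex is strictly below its threshold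
`T_v ∈ [1-4ε, 1-2ε]` times its weight, then after scaling all active edges
by `1/(1-ε)` (frozen edges unchanged) all dual constraints still hold. -/
theorem stmt_4 {V : Type*} [Fintype V] [DecidableEq V]
    (G : SimpleGraph V) [DecidableRel G.Adj]
    (w : V → ℝ) (hw : ∀ v, 0 < w v)
    (ε : ℝ) (hε : 0 < ε) (hε' : ε < 1)
    (T : V → ℝ) (hT : ∀ v, T v ∈ Set.Icc (1 - 4*ε) (1 - 2*ε))
    (Active : V → Prop) [DecidablePred Active]
    (x x' : Sym2 V → ℝ)
    (hx_nonneg : ∀ e ∈ G.edgeFinset, 0 ≤ x e)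
    (hx_valid : ∀ v : V, ∑ e ∈ G.edgeFinset.filter (fun e => v ∈ e), x e ≤ w v)
    (hactive : ∀ v : V, Active v →
      ∑ e ∈ G.edgeFinset.filter (fun e => v ∈ e), x e < T v * w v)
    (hx'_active : ∀ u v : V, G.Adj u v → Active u → Active v →
      x' s(u, v) = x s(u, v) / (1-ε))
    (hx'_frozen : ∀ u v : V, G.Adj u v → ¬(Active u ∧ Active v) →
      x' s(u, v) = x s(u, v)) :
    ∀ v : V, ∑ e ∈ G.edgeFinset.filter (fun e => v ∈ e), x' e ≤ w v := by
  intro v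
  have h1ε : (0:ℝ) < 1 - ε := by linarith
  -- key pointwise bound
  have hpt : ∀ e ∈ G.edgeFinset.filter (fun e => v ∈ e), x' e ≤ x e / (1-ε) := by
    intro e he
    simp only [Finset.mem_filter, SimpleGraph.mem_edgeFinset] at he
    obtain ⟨heE, hev⟩ := he
    induction e using Sym2.ind with
    | _ a b =>
      have hAdj : G.Adj a b := heE
      have hx0 : 0 ≤ x s(a,b) := hx_nonneg _ (by simpa using heE)
      by_cases hab : Active a ∧ Active b
      · rw [hx'_active a b hAdj hab.1 hab.2]
      · rw [hx'_frozen a b hAdj hab]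
        rw [le_div_iff₀ h1ε]
        nlinarith
  by_cases hv : Active v
  · calc ∑ e ∈ G.edgeFinset.filter (fun e => v ∈ e), x' e
        ≤ ∑ e ∈ G.edgeFinset.filter (fun e => v ∈ e), x e / (1-ε) :=
          Finset.sum_le_sum hpt
      _ = (∑ e ∈ G.edgeFinset.filter (fun e => v ∈ e), x e) / (1-ε) := by
          rw [Finset.sum_div]
      _ ≤ (T v * w v) / (1-ε) := by
          exact div_le_div_of_nonneg_right (le_of_lt (hactive v hv)) h1ε.le
      _ ≤ w v := by
          rw [div_le_iff₀ h1ε]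
          have hTv := (hT v).2
          nlinarith [hw v]
  · -- no edge at v is fully active, so the sum is unchanged
    have : ∀ e ∈ G.edgeFinset.filter (fun e => v ∈ e), x' e = x e := by
      intro e he
      simp only [Finset.mem_filter, SimpleGraph.mem_edgeFinset] at he
      obtain ⟨heE, hev⟩ := he
      induction e using Sym2.ind with
      | _ a b =>
        have hAdj : G.Adj a b := heE
        have hvab : v = a ∨ v = b := by simpa [Sym2.mem_iff] using hev
        apply hx'_frozen a b hAdj
        rintro ⟨ha, hb⟩
        rcases hvab with rfl | rfl <;> exact hv (by assumption)
    rw [Finset.sum_congr rfl this]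
    exact hx_valid v
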